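/- The Schwarzschild potential V_ℓ(r) = (1 − 2M/r)(2M/r³ + ℓ(ℓ+1)/r²) for r > 2M, M > 0, ℓ ≥ 0 an integer, is positive on (2M, ∞), tends to 0 as r → 2M⁺ and as r → ∞, and for ℓ ≥ 1 has a unique critical point r_ℓ ∈ (2M, ∞) which is a global maximum (one-hump property). For ℓ → ∞ the maximum point converges to 3M. -/

import Mathlib

open Filter

/-- The Schwarzschild (Regge–Wheeler) potential at angular momentum `ℓ`. -/
noncomputable def schwPot (M : ℝ) (ℓ : ℕ) (r : ℝ) : ℝ :=
  (1 - 2 * M / r) * (2 * M / r ^ 3 + (ℓ * (ℓ + 1) : ℝ) / r ^ 2)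


lemma schwPot_hasDerivAt (M : ℝ) (ℓ : ℕ) {r : ℝ} (hr : r ≠ 0) :
    HasDerivAt (schwPot M ℓ)
      ((-2) * ((ℓ * (ℓ + 1) : ℝ) * r ^ 2 - 3 * M * ((ℓ * (ℓ + 1) : ℝ) - 1) * r - 8 * M ^ 2) / r ^ 5) r := by
  have h3 : r ^ 3 ≠ 0 := pow_ne_zero _ hr
  have h2 : r ^ 2 ≠ 0 := pow_ne_zero _ hr
  have p1 : HasDerivAt (fun r : ℝ => 1 - 2 * M / r) (-(2 * M * -(r ^ 2)⁻¹)) r := by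
    simpa [div_eq_mul_inv] using (((hasDerivAt_inv hr).const_mul (2 * M)).const_sub 1)
  have p3 : HasDerivAt (fun r : ℝ => 2 * M / r ^ 3)
      (2 * M * (-(3 * r ^ 2) / (r ^ 3) ^ 2)) r := by
    simpa [div_eq_mul_inv] using (((hasDerivAt_pow 3 r).inv h3).const_mul (2 * M))
  have p2 : HasDerivAt (fun r : ℝ => (ℓ * (ℓ + 1) : ℝ) / r ^ 2)
      ((ℓ * (ℓ + 1) : ℝ) * (-(2 * r ^ 1) / (r ^ 2) ^ 2)) r := by
    simpa [div_eq_mul_inv] using (((hasDerivAt_pow 2 r).inv h2).const_mul ((ℓ * (ℓ + 1) : ℝ)))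
  have := p1.mul (p3.add p2)
  convert this using 1
  all_goals try rfl
  simp only [Pi.add_apply]
  field_simp
  ring

lemma schwPot_deriv (M : ℝ) (ℓ : ℕ) {r : ℝ} (hr : r ≠ 0) :
    deriv (schwPot M ℓ) r
      = (-2) * ((ℓ * (ℓ + 1) : ℝ) * r ^ 2 - 3 * M * ((ℓ * (ℓ + 1) : ℝ) - 1) * r - 8 * M ^ 2) / r ^ 5 :=
  (schwPot_hasDerivAt M ℓ hr).deriv

/-- The critical radius. -/
noncomputable def rcAux (M : ℝ) (ℓ : ℕ) : ℝ :=
  (3 * M * ((ℓ : ℝ) * (ℓ + 1) - 1)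
    + Real.sqrt (9 * M ^ 2 * ((ℓ : ℝ) * (ℓ + 1) - 1) ^ 2 + 32 * ((ℓ : ℝ) * (ℓ + 1)) * M ^ 2))
    / (2 * ((ℓ : ℝ) * (ℓ + 1)))

set_option maxHeartbeats 1000000 in
/-- `V_ℓ` is positive on `(2M, ∞)`, vanishes at `2M⁺` and at `∞`, and for `ℓ ≥ 1` has a
unique critical point `r_ℓ` (a global maximum: `V_ℓ' > 0` before it, `V_ℓ' < 0` after),
with `r_ℓ → 3M` as `ℓ → ∞`. -/
theorem stmt_17 (M : ℝ) (hM : 0 < M) :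
    (∀ ℓ : ℕ, ∀ r ∈ Set.Ioi (2 * M), 0 < schwPot M ℓ r) ∧
    (∀ ℓ : ℕ, Tendsto (schwPot M ℓ) (nhdsWithin (2 * M) (Set.Ioi (2 * M))) (nhds 0)) ∧
    (∀ ℓ : ℕ, Tendsto (schwPot M ℓ) atTop (nhds 0)) ∧
    ∃ rc : ℕ → ℝ,
      (∀ ℓ : ℕ, 1 ≤ ℓ →
        rc ℓ ∈ Set.Ioi (2 * M) ∧
        deriv (schwPot M ℓ) (rc ℓ) = 0 ∧
        (∀ s ∈ Set.Ioi (2 * M), deriv (schwPot M ℓ) s = 0 → s = rc ℓ) ∧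
        (∀ s ∈ Set.Ioo (2 * M) (rc ℓ), 0 < deriv (schwPot M ℓ) s) ∧
        (∀ s ∈ Set.Ioi (rc ℓ), deriv (schwPot M ℓ) s < 0)) ∧
      Tendsto rc atTop (nhds (3 * M)) := by
  have h2M : (0:ℝ) < 2 * M := by linarith
  refine ⟨?_, ?_, ?_, ?_⟩
  · -- positivity
    intro ℓ r hr
    have hr' : 2 * M < r := hr
    have hr0 : 0 < r := lt_trans h2M hr'
    have h1 : 0 < 1 - 2 * M / r := by
      have : 2 * M / r < 1 := (div_lt_one hr0).mpr hr'
      linarith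
    have h2 : 0 < 2 * M / r ^ 3 + (ℓ * (ℓ + 1) : ℝ) / r ^ 2 := by positivity
    exact mul_pos h1 h2
  · -- limit at 2M⁺
    intro ℓ
    have hne : (2 * M : ℝ) ≠ 0 := ne_of_gt h2M
    have hc : ContinuousAt (schwPot M ℓ) (2 * M) :=
      (schwPot_hasDerivAt M ℓ hne).continuousAt
    have hval : schwPot M ℓ (2 * M) = 0 := by
      unfold schwPot
      field_simp
      ring
    have := hc.continuousWithinAt (s := Set.Ioi (2 * M))
    rw [ContinuousWithinAt, hval] at this
    exact this
  · -- limit at ∞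
    intro ℓ
    have h1 : Tendsto (fun r : ℝ => 2 * M / r) atTop (nhds 0) :=
      Tendsto.div_atTop tendsto_const_nhds tendsto_id
    have h3 : Tendsto (fun r : ℝ => 2 * M / r ^ 3) atTop (nhds 0) :=
      Tendsto.div_atTop tendsto_const_nhds (tendsto_pow_atTop (by norm_num))
    have h2 : Tendsto (fun r : ℝ => (ℓ * (ℓ + 1) : ℝ) / r ^ 2) atTop (nhds 0) :=
      Tendsto.div_atTop tendsto_const_nhds (tendsto_pow_atTop (by norm_num))
    have hc1 : Tendsto (fun _ : ℝ => (1:ℝ)) atTop (nhds 1) := tendsto_const_nhds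
    have := (hc1.sub h1).mul (h3.add h2)
    unfold schwPot
    simpa [schwPot.eq_def] using this
  · refine ⟨rcAux M, ?_, ?_⟩
    · intro ℓ hℓ
      have hℓ1 : (1:ℝ) ≤ (ℓ:ℝ) := by exact_mod_cast hℓ
      set L : ℝ := (ℓ : ℝ) * ((ℓ:ℝ) + 1) with hLdef
      have hL : 2 ≤ L := by nlinarith
      have hL0 : 0 < L := by linarith
      set D : ℝ := 9 * M ^ 2 * (L - 1) ^ 2 + 32 * L * M ^ 2 with hDdef
      have hD : 0 ≤ D := by nlinarith [sq_nonneg (L-1), sq_nonneg M]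
      have hs : Real.sqrt D ^ 2 = D := Real.sq_sqrt hD
      have hs0 : 0 ≤ Real.sqrt D := Real.sqrt_nonneg D
      have hrc : rcAux M ℓ = (3 * M * (L - 1) + Real.sqrt D) / (2 * L) := by
        simp [rcAux, hLdef, hDdef]
      have hderiv : ∀ s : ℝ, s ≠ 0 → deriv (schwPot M ℓ) s
          = (-2) * (L * s ^ 2 - 3 * M * (L - 1) * s - 8 * M ^ 2) / s ^ 5 := by
        intro s hs'
        rw [schwPot_deriv M ℓ hs', hLdef]
      -- sqrt lower bounds
      have hsgt : M * (L + 3) < Real.sqrt D := by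
        rw [show M * (L + 3) = Real.sqrt ((M * (L+3))^2) by
          rw [Real.sqrt_sq (by positivity)]]
        apply Real.sqrt_lt_sqrt (by positivity)
        nlinarith [sq_nonneg M]
      have hsge : 3 * M * (L - 1) ≤ Real.sqrt D := by
        rw [show 3 * M * (L - 1) = Real.sqrt ((3 * M * (L-1))^2) by
          rw [Real.sqrt_sq (by nlinarith)]]
        apply Real.sqrt_le_sqrt
        nlinarith
      have hgt : 2 * M < rcAux M ℓ := by
        rw [hrc, lt_div_iff₀ (by linarith)]
        nlinarith
      have hrc0 : (0:ℝ) < rcAux M ℓ := lt_trans h2M hgt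
      -- quadratic root
      have hQ : L * (rcAux M ℓ) ^ 2 - 3 * M * (L - 1) * (rcAux M ℓ) - 8 * M ^ 2 = 0 := by
        rw [hrc]
        field_simp
        nlinarith [hs]
      -- factorization
      have hfact : ∀ s : ℝ, L * s ^ 2 - 3 * M * (L - 1) * s - 8 * M ^ 2
          = (s - rcAux M ℓ) * (L * (s + rcAux M ℓ) - 3 * M * (L - 1)) := by
        intro s
        linear_combination hQ
      have hpos : ∀ s : ℝ, 0 < s → 0 < L * (s + rcAux M ℓ) - 3 * M * (L - 1) := by
        intro s hspos
        have h1 : 3 * M * (L - 1) ≤ L * rcAux M ℓ := by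
          rw [hrc, show L * ((3 * M * (L - 1) + Real.sqrt D) / (2 * L))
              = (3 * M * (L - 1) + Real.sqrt D) / 2 by field_simp]
          linarith
        nlinarith
      refine ⟨hgt, ?_, ?_, ?_, ?_⟩
      · rw [hderiv _ (ne_of_gt hrc0), hQ]
        simp
      · intro s hs' hds
        have hs0' : 0 < s := lt_trans h2M hs'
        rw [hderiv _ (ne_of_gt hs0')] at hds
        have hQs : L * s ^ 2 - 3 * M * (L - 1) * s - 8 * M ^ 2 = 0 := by
          rw [div_eq_zero_iff] at hds
          rcases hds with h' | h'
          · linarith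
          · exact absurd h' (by positivity)
        rw [hfact s] at hQs
        have := hpos s hs0'
        have hz : s - rcAux M ℓ = 0 := by
          rcases mul_eq_zero.mp hQs with h | h
          · exact h
          · linarith
        linarith
      · intro s hsm
        obtain ⟨hs1, hs2⟩ := hsm
        have hs0' : 0 < s := lt_trans h2M hs1
        rw [hderiv _ (ne_of_gt hs0')]
        apply div_pos
        · have := hpos s hs0'
          have hQneg : L * s ^ 2 - 3 * M * (L - 1) * s - 8 * M ^ 2 < 0 := by
            rw [hfact s]
            exact mul_neg_of_neg_of_pos (by linarith) this
          linarith
        · positivity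
      · intro s hsm
        have hs1 : rcAux M ℓ < s := hsm
        have hs0' : 0 < s := lt_trans hrc0 hs1
        rw [hderiv _ (ne_of_gt hs0')]
        apply div_neg_of_neg_of_pos
        · have := hpos s hs0'
          have hQpos : 0 < L * s ^ 2 - 3 * M * (L - 1) * s - 8 * M ^ 2 := by
            rw [hfact s]
            exact mul_pos (by linarith) this
          linarith
        · positivity
    · -- tendsto rcAux → 3M
      have hLtop : Tendsto (fun ℓ : ℕ => ((ℓ:ℝ) * ((ℓ:ℝ) + 1))) atTop atTop :=
        Tendsto.atTop_mul_atTop₀ tendsto_natCast_atTop_atTop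
          (tendsto_atTop_add_const_right _ 1 tendsto_natCast_atTop_atTop)
      have hx : Tendsto (fun ℓ : ℕ => ((ℓ:ℝ) * ((ℓ:ℝ) + 1))⁻¹) atTop (nhds 0) :=
        hLtop.inv_tendsto_atTop
      have hgc : Continuous (fun x : ℝ =>
          (3 * M * (1 - x) + Real.sqrt (9 * M ^ 2 * (1 - x) ^ 2 + 32 * M ^ 2 * x)) / 2) := by
        apply Continuous.div_const
        apply Continuous.add
        · fun_prop
        · exact Real.continuous_sqrt.comp (by fun_prop)
      have hg0 : (3 * M * (1 - (0:ℝ)) + Real.sqrt (9 * M ^ 2 * (1 - (0:ℝ)) ^ 2 + 32 * M ^ 2 * 0)) / 2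
          = 3 * M := by
        rw [show (9 * M ^ 2 * (1 - (0:ℝ)) ^ 2 + 32 * M ^ 2 * 0 : ℝ) = (3 * M) ^ 2 by ring,
          Real.sqrt_sq (by positivity)]
        ring
      have hcomp := (hgc.tendsto 0).comp hx
      beta_reduce at hcomp
      rw [hg0] at hcomp
      apply hcomp.congr'
      filter_upwards [eventually_ge_atTop 1] with ℓ hℓ
      simp only [Function.comp]
      have hℓ1 : (1:ℝ) ≤ (ℓ:ℝ) := by exact_mod_cast hℓ
      have hL0 : (0:ℝ) < (ℓ:ℝ) * ((ℓ:ℝ) + 1) := by nlinarith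
      set L : ℝ := (ℓ : ℝ) * ((ℓ:ℝ) + 1) with hLdef
      have hD : 0 ≤ 9 * M ^ 2 * (L - 1) ^ 2 + 32 * L * M ^ 2 := by nlinarith [sq_nonneg (L-1)]
      have key : 9 * M ^ 2 * (1 - L⁻¹) ^ 2 + 32 * M ^ 2 * L⁻¹
          = (9 * M ^ 2 * (L - 1) ^ 2 + 32 * L * M ^ 2) / L ^ 2 := by
        field_simp
      have hrc : rcAux M ℓ = (3 * M * (L - 1)
          + Real.sqrt (9 * M ^ 2 * (L - 1) ^ 2 + 32 * L * M ^ 2)) / (2 * L) := by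
        simp [rcAux, hLdef]
      rw [hrc, key, Real.sqrt_div hD, Real.sqrt_sq hL0.le]
      rw [div_eq_div_iff (by norm_num) (by linarith)]
      field_simp
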